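/- If X is a shellable finite simplicial complex and 0 ≤ r ≤ s ≤ dim X, then the complex X^{(r,s)} = { σ ∈ X : dim σ ≤ s and σ ⊆ F for some facet F with dim F ≥ r } is shellable. -/

import Mathlib

open scoped Classical

variable {V : Type*} [DecidableEq V]

/-- A finite (abstract) simplicial complex: a finite family of nonempty finite sets,
closed under nonempty subsets. -/
def IsComplex (X : Finset (Finset V)) : Prop :=
  (∀ s ∈ X, s.Nonempty) ∧ ∀ s ∈ X, ∀ t : Finset V, t.Nonempty → t ⊆ s → t ∈ X

/-- A facet is a maximal face. -/
def IsFacet (X : Finset (Finset V)) (s : Finset V) : Prop :=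
  s ∈ X ∧ ∀ t ∈ X, s ⊆ t → s = t

/-- A shelling of `X`. -/
def IsShelling (X : Finset (Finset V)) {t : ℕ} (F : Fin t → Finset V) : Prop :=
  Function.Injective F ∧ (∀ i, IsFacet X (F i)) ∧ (∀ s, IsFacet X s → ∃ i, F i = s) ∧
    ∀ k : Fin t, 0 < (k : ℕ) →
      ∃ S : Finset (Finset V), S.Nonempty ∧
        (∀ s ∈ S, s ⊆ F k ∧ s.card + 1 = (F k).card) ∧
        ∀ σ : Finset V, σ.Nonempty →
          ((σ ⊆ F k ∧ ∃ i, i < k ∧ σ ⊆ F i) ↔ ∃ s ∈ S, σ ⊆ s)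

/-- `X` is shellable if it admits a shelling. -/
def Shellable (X : Finset (Finset V)) : Prop :=
  ∃ (t : ℕ) (F : Fin t → Finset V), IsShelling X F

/-! ### List-based shelling infrastructure -/

/-- The shelling condition for a new facet `B` appended after the facets in `P`. -/
def OkStep (B : Finset V) (P : List (Finset V)) : Prop :=
  P ≠ [] → ∃ S : Finset (Finset V), S.Nonempty ∧
    (∀ s ∈ S, s ⊆ B ∧ s.card + 1 = B.card) ∧
    ∀ σ : Finset V, σ.Nonempty → ((σ ⊆ B ∧ ∃ A ∈ P, σ ⊆ A) ↔ ∃ s ∈ S, σ ⊆ s)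

def OkList (P L : List (Finset V)) : Prop :=
  ∀ i (h : i < L.length), OkStep L[i] (P ++ L.take i)

theorem okList_nil (P : List (Finset V)) : OkList P [] := by
  intro i h; simp at h

theorem okList_append {P L₁ L₂ : List (Finset V)} (h1 : OkList P L₁)
    (h2 : OkList (P ++ L₁) L₂) : OkList P (L₁ ++ L₂) := by
  intro i h
  rcases lt_or_ge i L₁.length with hi | hi
  · have : (L₁ ++ L₂)[i]'h = L₁[i]'hi := List.getElem_append_left hi
    rw [this]
    have ht : (L₁ ++ L₂).take i = L₁.take i ++ L₂.take (i - L₁.length) := by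
      exact List.take_append
    have : i - L₁.length = 0 := by omega
    rw [this] at ht
    simpa [ht] using h1 i hi
  · have hlen : i - L₁.length < L₂.length := by
      have := h; simp [List.length_append] at this; omega
    have hg : (L₁ ++ L₂)[i]'h = L₂[i - L₁.length]'hlen := by
      exact List.getElem_append_right hi
    rw [hg]
    have ht : (L₁ ++ L₂).take i = L₁.take i ++ L₂.take (i - L₁.length) := by
      exact List.take_append
    have : L₁.take i = L₁ := List.take_of_length_le (by omega)
    rw [this] at ht
    have := h2 (i - L₁.length) hlen
    rw [ht, ← List.append_assoc]
    exact this

theorem shellable_of_list (Y : Finset (Finset V)) (L : List (Finset V))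
    (hnd : L.Nodup) (hfac : ∀ A ∈ L, IsFacet Y A) (hsurj : ∀ A, IsFacet Y A → A ∈ L)
    (hok : OkList [] L) : Shellable Y := by
  refine ⟨L.length, L.get, ?_, ?_, ?_, ?_⟩
  · exact List.nodup_iff_injective_get.1 hnd
  · intro i; exact hfac _ (L.get_mem _)
  · intro A hA
    obtain ⟨n, hn, h⟩ := List.mem_iff_getElem.1 (hsurj A hA)
    exact ⟨⟨n, hn⟩, h⟩
  · intro k hk
    have := hok k.1 k.2
    rw [List.nil_append] at this
    have hne : L.take k.1 ≠ [] := by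
      have : (L.take k.1).length = k.1 := by
        rw [List.length_take]; omega
      intro hcon; rw [hcon] at this; simp at this; omega
    obtain ⟨S, hS1, hS2, hS3⟩ := this hne
    refine ⟨S, hS1, fun s hs => hS2 s hs, fun σ hσ => ?_⟩
    rw [← hS3 σ hσ]
    constructor
    · rintro ⟨h1, i, hik, h2⟩
      refine ⟨h1, L.get i, ?_, h2⟩
      have hil : i.1 < (L.take k.1).length := by rw [List.length_take]; omega
      have heq : (L.take k.1)[i.1]'hil = L[i.1] := List.getElem_take
      have : L.get i = (L.take k.1)[i.1]'hil := by simp [heq]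
      rw [this]
      exact List.getElem_mem _
    · rintro ⟨h1, A, hA, h2⟩
      obtain ⟨j, hj, hjA⟩ := List.mem_iff_getElem.1 hA
      have hjk : j < k.1 := by
        have := hj; rw [List.length_take] at this; omega
      have hjL : j < L.length := by omega
      have : (L.take k.1)[j]'hj = L[j] := List.getElem_take
      refine ⟨h1, ⟨j, hjL⟩, by simpa [Fin.lt_def] using hjk, ?_⟩
      simp only [List.get_eq_getElem]
      rw [← this, hjA]; exact h2

/-! ### The skeleton construction -/

section Core

variable [LinearOrder V]

/-- Big facet indices. -/
def BigF (r t : ℕ) (Fm : ℕ → Finset V) (n : ℕ) : Prop :=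
  n < t ∧ r + 1 ≤ (Fm n).card

/-- The colex order on finsets, as a relation suitable for `Finset.sort`. -/
def cle (A B : Finset V) : Prop := (toColex A : Colex (Finset V)) ≤ toColex B

instance : DecidableRel (cle (V := V)) := fun A B =>
  inferInstanceAs (Decidable (_ ≤ _))
instance : IsTrans (Finset V) cle := ⟨fun _ _ _ => le_trans⟩
instance : IsAntisymm (Finset V) cle :=
  ⟨fun _ _ h1 h2 => toColex.injective (le_antisymm h1 h2)⟩
instance : IsTotal (Finset V) cle := ⟨fun _ _ => le_total _ _⟩

/-- The block of new facets of the interval complex contributed by facet `n`. -/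
noncomputable def blk (r s t : ℕ) (Fm Rm : ℕ → Finset V) (n : ℕ) : List (Finset V) :=
  if BigF r t Fm n then
    (if (Fm n).card ≤ s + 1 then [Fm n]
     else (((Fm n).powersetCard (s + 1)).filter (fun A => Rm n ⊆ A)).sort cle)
  else []

variable {X Y : Finset (Finset V)} {r s t : ℕ} {Fm Rm : ℕ → Finset V}

theorem blk_mem {A : Finset V} {n : ℕ} :
    A ∈ blk r s t Fm Rm n ↔ BigF r t Fm n ∧
      (((Fm n).card ≤ s + 1 ∧ A = Fm n) ∨
       (s + 2 ≤ (Fm n).card ∧ A ⊆ Fm n ∧ A.card = s + 1 ∧ Rm n ⊆ A)) := by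
  unfold blk
  by_cases hb : BigF r t Fm n
  · simp only [if_pos hb]
    by_cases hc : (Fm n).card ≤ s + 1
    · simp only [if_pos hc]
      simp only [List.mem_singleton]
      constructor
      · intro h; exact ⟨hb, Or.inl ⟨hc, h⟩⟩
      · rintro ⟨-, h | h⟩
        · exact h.2
        · omega
    · simp only [if_neg hc, Finset.mem_sort, Finset.mem_filter, Finset.mem_powersetCard]
      constructor
      · rintro ⟨⟨h1, h2⟩, h3⟩
        exact ⟨hb, Or.inr ⟨by omega, h1, h2, h3⟩⟩
      · rintro ⟨-, h | h⟩
        · omega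
        · exact ⟨⟨h.2.1, h.2.2.1⟩, h.2.2.2⟩
  · simp [hb]

theorem blk_props (hX : IsComplex X)
    (hFacet : ∀ n, BigF r t Fm n → IsFacet X (Fm n)) (hRsub : ∀ n, Rm n ⊆ Fm n)
    {A : Finset V} {n : ℕ} (hA : A ∈ blk r s t Fm Rm n) :
    BigF r t Fm n ∧ A ⊆ Fm n ∧ Rm n ⊆ A ∧ A.card ≤ s + 1 ∧ A.Nonempty := by
  rw [blk_mem] at hA
  obtain ⟨hb, ⟨hc, rfl⟩ | h⟩ := hA
  · exact ⟨hb, subset_rfl, hRsub n, hc, hX.1 _ (hFacet n hb).1⟩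
  · refine ⟨hb, h.2.1, h.2.2.2, by omega, ?_⟩
    rw [← Finset.card_pos, h.2.2.1]; omega

theorem blk_mem_Y (hX : IsComplex X)
    (hY : ∀ σ : Finset V, σ ∈ Y ↔ σ ∈ X ∧ σ.card ≤ s + 1 ∧
      ∃ f ∈ X, IsFacet X f ∧ r + 1 ≤ f.card ∧ σ ⊆ f)
    (hFacet : ∀ n, BigF r t Fm n → IsFacet X (Fm n)) (hRsub : ∀ n, Rm n ⊆ Fm n)
    {A : Finset V} {n : ℕ} (hA : A ∈ blk r s t Fm Rm n) : A ∈ Y := by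
  obtain ⟨hb, hsub, -, hcard, hne⟩ := blk_props hX hFacet hRsub hA
  have hfn := hFacet n hb
  rw [hY]
  exact ⟨hX.2 _ hfn.1 _ hne hsub, hcard, Fm n, hfn.1, hfn, hb.2, hsub⟩

theorem blk_facet (hX : IsComplex X)
    (hY : ∀ σ : Finset V, σ ∈ Y ↔ σ ∈ X ∧ σ.card ≤ s + 1 ∧
      ∃ f ∈ X, IsFacet X f ∧ r + 1 ≤ f.card ∧ σ ⊆ f)
    (hFacet : ∀ n, BigF r t Fm n → IsFacet X (Fm n)) (hRsub : ∀ n, Rm n ⊆ Fm n)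
    {A : Finset V} {n : ℕ} (hA : A ∈ blk r s t Fm Rm n) : IsFacet Y A := by
  refine ⟨blk_mem_Y hX hY hFacet hRsub hA, ?_⟩
  intro τ hτ hAτ
  have hτX := (hY τ).1 hτ
  rw [blk_mem] at hA
  obtain ⟨hb, ⟨hc, rfl⟩ | h⟩ := hA
  · exact (hFacet n hb).2 τ hτX.1 hAτ
  · have : τ.card ≤ A.card := by omega
    exact Finset.eq_of_subset_of_card_le hAτ this

/-- Coverage: every small face of a big facet is covered by a block no later than it. -/
theorem cov (hKey : ∀ n, BigF r t Fm n → ∀ σ : Finset V, σ.Nonempty → σ ⊆ Fm n →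
      ((∃ i, i < n ∧ BigF r t Fm i ∧ σ ⊆ Fm i) ↔ ¬ Rm n ⊆ σ)) :
    ∀ n, BigF r t Fm n → ∀ σ : Finset V, σ.Nonempty → σ.card ≤ s + 1 → σ ⊆ Fm n →
      ∃ m, m ≤ n ∧ ∃ A ∈ blk r s t Fm Rm m, σ ⊆ A := by
  intro n
  induction n using Nat.strong_induction_on with
  | _ n ih =>
    intro hb σ hne hcard hsub
    by_cases hR : Rm n ⊆ σ
    · by_cases hc : (Fm n).card ≤ s + 1
      · exact ⟨n, le_rfl, Fm n, blk_mem.2 ⟨hb, Or.inl ⟨hc, rfl⟩⟩, hsub⟩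
      · obtain ⟨A, hσA, hAF, hAcard⟩ :=
          Finset.exists_subsuperset_card_eq hsub hcard (by omega)
        exact ⟨n, le_rfl, A,
          blk_mem.2 ⟨hb, Or.inr ⟨by omega, hAF, hAcard, hR.trans hσA⟩⟩, hσA⟩
    · obtain ⟨i, hin, hbi, hσi⟩ := ((hKey n hb σ hne hsub).2 hR)
      obtain ⟨m, hm, hA⟩ := ih i hin hbi σ hne hcard hσi
      exact ⟨m, by omega, hA⟩

/-- The accumulated prefix. -/
noncomputable def pref (r s t : ℕ) (Fm Rm : ℕ → Finset V) (n : ℕ) : List (Finset V) :=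
  (List.range n).flatMap (blk r s t Fm Rm)

theorem pref_mem {A : Finset V} {n : ℕ} :
    A ∈ pref r s t Fm Rm n ↔ ∃ m, m < n ∧ A ∈ blk r s t Fm Rm m := by
  simp [pref, List.mem_flatMap, List.mem_range]

theorem pref_succ (n : ℕ) :
    pref r s t Fm Rm (n + 1) = pref r s t Fm Rm n ++ blk r s t Fm Rm n := by
  unfold pref
  rw [List.range_succ, List.flatMap_append]
  simp

/-- The invariant: the prefix before block `n` covers exactly the small faces of
earlier big facets. -/
theorem inv_pref (hX : IsComplex X)
    (hFacet : ∀ n, BigF r t Fm n → IsFacet X (Fm n)) (hRsub : ∀ n, Rm n ⊆ Fm n)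
    (hKey : ∀ n, BigF r t Fm n → ∀ σ : Finset V, σ.Nonempty → σ ⊆ Fm n →
      ((∃ i, i < n ∧ BigF r t Fm i ∧ σ ⊆ Fm i) ↔ ¬ Rm n ⊆ σ))
    {n : ℕ} {σ : Finset V} (hne : σ.Nonempty) (hcard : σ.card ≤ s + 1) :
    (∃ A ∈ pref r s t Fm Rm n, σ ⊆ A) ↔ ∃ i, i < n ∧ BigF r t Fm i ∧ σ ⊆ Fm i := by
  constructor
  · rintro ⟨A, hA, hσA⟩
    obtain ⟨m, hmn, hAm⟩ := pref_mem.1 hA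
    obtain ⟨hb, hsub, -, -, -⟩ := blk_props hX hFacet hRsub hAm
    exact ⟨m, hmn, hb, hσA.trans hsub⟩
  · rintro ⟨i, hin, hbi, hσi⟩
    obtain ⟨m, hmi, A, hAm, hσA⟩ := cov hKey i hbi σ hne hcard hσi
    exact ⟨A, pref_mem.2 ⟨m, by omega, hAm⟩, hσA⟩

theorem colex_wit {A B F' : Finset V} (hA : A ⊆ F') (hle : cle A B) (hne : A ≠ B)
    (hcard : A.card = B.card) : ∃ x, x ∈ B ∧ x ∉ A ∧ ∃ y ∈ F' \ B, y < x := by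
  have hBA : (B \ A).Nonempty := by
    rw [Finset.sdiff_nonempty]
    intro h; exact hne ((Finset.eq_of_subset_of_card_le h hcard.le).symm)
  have hAB : (A \ B).Nonempty := by
    rw [Finset.sdiff_nonempty]
    intro h; exact hne (Finset.eq_of_subset_of_card_le h hcard.symm.le)
  have hx : (B \ A).max' hBA ∈ B \ A := Finset.max'_mem _ _
  obtain ⟨y, hy⟩ := hAB
  have hyA : y ∈ A := (Finset.mem_sdiff.1 hy).1
  have hyB : y ∉ B := (Finset.mem_sdiff.1 hy).2
  obtain ⟨b, hbB, hbA, hyb⟩ := hle hyA hyB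
  have hbx : b ≤ (B \ A).max' hBA := Finset.le_max' _ _ (Finset.mem_sdiff.2 ⟨hbB, hbA⟩)
  have hylt : y < b := lt_of_le_of_ne hyb (fun h => hyB (h ▸ hbB))
  exact ⟨(B \ A).max' hBA, (Finset.mem_sdiff.1 hx).1, (Finset.mem_sdiff.1 hx).2, y,
    Finset.mem_sdiff.2 ⟨hA hyA, hyB⟩, lt_of_lt_of_le hylt hbx⟩

theorem okBlock (hX : IsComplex X)
    (hFacet : ∀ n, BigF r t Fm n → IsFacet X (Fm n)) (hRsub : ∀ n, Rm n ⊆ Fm n)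
    (hRne : ∀ n, 0 < n → n < t → (Rm n).Nonempty)
    (hKey : ∀ n, BigF r t Fm n → ∀ σ : Finset V, σ.Nonempty → σ ⊆ Fm n →
      ((∃ i, i < n ∧ BigF r t Fm i ∧ σ ⊆ Fm i) ↔ ¬ Rm n ⊆ σ))
    {n : ℕ} (hbig : BigF r t Fm n) :
    OkList (pref r s t Fm Rm n) (blk r s t Fm Rm n) := by
  set l := blk r s t Fm Rm n with hl
  intro q hq hPne
  set B := l[q] with hBdef
  have hBl : B ∈ l := List.getElem_mem hq
  obtain ⟨-, hBF, hRB, hBcard, hBne⟩ := blk_props hX hFacet hRsub hBl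
  set filt := B.filter (fun x => x ∈ Rm n ∨ ∃ y ∈ Fm n \ B, y < x) with hfilt
  have hsortcase : ∀ (_ : ¬ (Fm n).card ≤ s + 1),
      l = (((Fm n).powersetCard (s + 1)).filter (fun A => Rm n ⊆ A)).sort cle := by
    intro hc
    rw [hl]; unfold blk; rw [if_pos hbig, if_neg hc]
  have hsmallcase : ∀ (_ : (Fm n).card ≤ s + 1), l = [Fm n] := by
    intro hc
    rw [hl]; unfold blk; rw [if_pos hbig, if_pos hc]
  -- pairwise facts within the block (big subcase)
  have hpair : ∀ (p p' : ℕ) (hp : p < l.length) (hp' : p' < l.length), p < p' →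
      cle (l[p]'hp) (l[p']'hp') ∧ (l[p]'hp) ≠ (l[p']'hp') := by
    intro p p' hp hp' hpp
    by_cases hc : (Fm n).card ≤ s + 1
    · exfalso
      have := hsmallcase hc
      rw [this] at hp hp'
      simp at hp hp'; omega
    · have hs' := Finset.pairwise_sort (((Fm n).powersetCard (s + 1)).filter
        (fun A => Rm n ⊆ A)) cle
      have hn' := Finset.sort_nodup (((Fm n).powersetCard (s + 1)).filter
        (fun A => Rm n ⊆ A)) cle
      rw [← hsortcase hc] at hs' hn'
      exact ⟨List.pairwise_iff_getElem.1 hs' p p' hp hp' hpp,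
        List.pairwise_iff_getElem.1 hn' p p' hp hp' hpp⟩
  -- membership facts for block elements in the big subcase
  have hmem' : ∀ (hc : ¬ (Fm n).card ≤ s + 1) (A : Finset V), A ∈ l →
      A ⊆ Fm n ∧ A.card = s + 1 ∧ Rm n ⊆ A := by
    intro hc A hA
    rw [hl, blk_mem] at hA
    rcases hA with ⟨-, ⟨h1, -⟩ | h⟩
    · exact absurd h1 hc
    · exact h.2
  -- the witness extraction for same-block earlier elements
  have hwit : ∀ A, A ∈ l → cle A B → A ≠ B → ∃ x ∈ filt, x ∉ A := by
    intro A hAl hle hne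
    by_cases hc : (Fm n).card ≤ s + 1
    · exfalso
      have h1 := hsmallcase hc
      rw [h1] at hAl hBl
      simp at hAl hBl
      exact hne (hAl.trans hBl.symm)
    · obtain ⟨hAF, hAcard, -⟩ := hmem' hc A hAl
      obtain ⟨-, hBcard', -⟩ := hmem' hc B hBl
      obtain ⟨x, hxB, hxA, y, hy, hyx⟩ := colex_wit hAF hle hne (hAcard.trans hBcard'.symm)
      exact ⟨x, Finset.mem_filter.2 ⟨hxB, Or.inr ⟨y, hy, hyx⟩⟩, hxA⟩
  refine ⟨filt.image B.erase, ?_, ?_, ?_⟩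
  · -- nonemptiness of the codim-1 family
    rcases Nat.eq_zero_or_pos q with hq0 | hq0
    · -- the prefix is nonempty
      have hPne' : pref r s t Fm Rm n ≠ [] := by
        simpa [hq0] using hPne
      obtain ⟨A₀, hA₀⟩ := List.exists_mem_of_ne_nil _ hPne'
      obtain ⟨m, hmn, hA₀m⟩ := pref_mem.1 hA₀
      have hn0 : 0 < n := by omega
      obtain ⟨x, hx⟩ := hRne n hn0 hbig.1
      exact ⟨B.erase x, Finset.mem_image_of_mem _
        (Finset.mem_filter.2 ⟨hRB hx, Or.inl hx⟩)⟩
    · -- there is an earlier element in the same block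
      have hq1 : q - 1 < l.length := by omega
      have hcle := hpair (q - 1) q hq1 hq (by omega)
      obtain ⟨x, hxf, -⟩ := hwit (l[q-1]'hq1) (List.getElem_mem hq1) hcle.1 hcle.2
      exact ⟨B.erase x, Finset.mem_image_of_mem _ hxf⟩
  · -- codimension one
    intro s' hs'
    obtain ⟨x, hxf, rfl⟩ := Finset.mem_image.1 hs'
    have hxB : x ∈ B := (Finset.mem_filter.1 hxf).1
    exact ⟨Finset.erase_subset _ _, Finset.card_erase_add_one hxB⟩
  · -- the main equivalence
    intro σ hσne
    have hσcard : ∀ (_ : σ ⊆ B), σ.card ≤ s + 1 :=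
      fun h => le_trans (Finset.card_le_card h) hBcard
    constructor
    · rintro ⟨hσB, A, hA, hσA⟩
      rcases List.mem_append.1 hA with hAP | hAt
      · -- σ lies in an earlier block
        have hold : ∃ i, i < n ∧ BigF r t Fm i ∧ σ ⊆ Fm i :=
          (inv_pref hX hFacet hRsub hKey hσne (hσcard hσB)).1 ⟨A, hAP, hσA⟩
        have hnR : ¬ Rm n ⊆ σ := (hKey n hbig σ hσne (hσB.trans hBF)).1 hold
        obtain ⟨x, hxR, hxσ⟩ := Finset.not_subset.1 hnR
        refine ⟨B.erase x, Finset.mem_image_of_mem _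
          (Finset.mem_filter.2 ⟨hRB hxR, Or.inl hxR⟩), ?_⟩
        exact Finset.subset_erase.2 ⟨hσB, hxσ⟩
      · -- σ lies in an earlier element of the same block
        obtain ⟨p, hp, hpA⟩ := List.mem_iff_getElem.1 hAt
        have hpq : p < q := by
          have := hp; rw [List.length_take] at this; omega
        have hpl : p < l.length := by omega
        have hpA' : A = l[p]'hpl := by
          rw [← hpA]; exact List.getElem_take
        have hcle := hpair p q hpl hq hpq
        rw [← hpA'] at hcle
        obtain ⟨x, hxf, hxA⟩ := hwit A (hpA' ▸ List.getElem_mem hpl) hcle.1 hcle.2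
        refine ⟨B.erase x, Finset.mem_image_of_mem _ hxf, ?_⟩
        exact Finset.subset_erase.2 ⟨hσB, fun h => hxA (hσA h)⟩
    · rintro ⟨s', hs', hσs'⟩
      obtain ⟨x, hxf, rfl⟩ := Finset.mem_image.1 hs'
      have hxB : x ∈ B := (Finset.mem_filter.1 hxf).1
      have hσB : σ ⊆ B := hσs'.trans (Finset.erase_subset _ _)
      have hxσ : x ∉ σ := fun h => (Finset.notMem_erase x B) (hσs' h)
      refine ⟨hσB, ?_⟩
      by_cases hxR : x ∈ Rm n
      · -- via an earlier block
        have hnR : ¬ Rm n ⊆ σ := fun h => hxσ (h hxR)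
        have hold := (hKey n hbig σ hσne (hσB.trans hBF)).2 hnR
        obtain ⟨A, hAP, hσA⟩ :=
          (inv_pref hX hFacet hRsub hKey hσne (hσcard hσB)).2 hold
        exact ⟨A, List.mem_append_left _ hAP, hσA⟩
      · -- via an earlier element of the same block
        have hwity : ∃ y ∈ Fm n \ B, y < x := by
          rcases (Finset.mem_filter.1 hxf).2 with h | h
          · exact absurd h hxR
          · exact h
        obtain ⟨y, hy, hyx⟩ := hwity
        have hyF : y ∈ Fm n := (Finset.mem_sdiff.1 hy).1
        have hyB : y ∉ B := (Finset.mem_sdiff.1 hy).2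
        have hc : ¬ (Fm n).card ≤ s + 1 := by
          intro hc
          have h1 := hsmallcase hc
          rw [h1] at hBl
          simp at hBl
          rw [hBl] at hyB
          exact hyB hyF
        obtain ⟨-, hBcard', hRB'⟩ := hmem' hc B hBl
        set A' := insert y (B.erase x) with hA'
        have hyBe : y ∉ B.erase x := fun h => hyB (Finset.mem_of_mem_erase h)
        have hA'card : A'.card = s + 1 := by
          rw [hA', Finset.card_insert_of_notMem hyBe, Finset.card_erase_of_mem hxB, hBcard']
          omega
        have hA'F : A' ⊆ Fm n := by
          rw [hA']
          exact Finset.insert_subset hyF ((Finset.erase_subset _ _).trans hBF)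
        have hRA' : Rm n ⊆ A' := by
          intro z hz
          have hzB : z ∈ B := hRB' hz
          have hzx : z ≠ x := fun h => hxR (h ▸ hz)
          exact Finset.mem_insert_of_mem (Finset.mem_erase.2 ⟨hzx, hzB⟩)
        have hA'l : A' ∈ l := by
          rw [hsortcase hc, Finset.mem_sort, Finset.mem_filter, Finset.mem_powersetCard]
          exact ⟨⟨hA'F, hA'card⟩, hRA'⟩
        have hxA' : x ∉ A' := by
          rw [hA', Finset.mem_insert]
          rintro (h | h)
          · exact absurd h.symm (ne_of_lt hyx)
          · exact (Finset.notMem_erase x B) h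
        have hA'ne : A' ≠ B := fun h => hxA' (h ▸ hxB)
        have hA'le : cle A' B := by
          intro a haA' haB
          have : a = y := by
            rcases Finset.mem_insert.1 haA' with h | h
            · exact h
            · exact absurd (Finset.mem_of_mem_erase h) haB
          exact ⟨x, hxB, hxA', this ▸ le_of_lt hyx⟩
        -- A' appears earlier in the block
        obtain ⟨p, hp, hpA'⟩ := List.mem_iff_getElem.1 hA'l
        have hpq : p < q := by
          by_contra hcon
          push_neg at hcon
          rcases eq_or_lt_of_le hcon with h | h
          · apply hA'ne
            rw [← hpA', hBdef]
            congr 1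
            omega
          · have hBA' := hpair q p hq hp h
            have h2 : cle (l[p]'hp) B := by rw [hpA']; exact hA'le
            have heq : (l[p]'hp) = B := antisymm h2 hBA'.1
            exact hBA'.2 heq.symm
        have hA'take : A' ∈ l.take q := by
          have hp' : p < (l.take q).length := by rw [List.length_take]; omega
          have : (l.take q)[p]'hp' = l[p]'hp := List.getElem_take
          rw [← hpA', ← this]
          exact List.getElem_mem hp'
        exact ⟨A', List.mem_append_right _ hA'take, hσs'.trans (Finset.subset_insert _ _)⟩

theorem okPref (hX : IsComplex X)
    (hFacet : ∀ n, BigF r t Fm n → IsFacet X (Fm n)) (hRsub : ∀ n, Rm n ⊆ Fm n)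
    (hRne : ∀ n, 0 < n → n < t → (Rm n).Nonempty)
    (hKey : ∀ n, BigF r t Fm n → ∀ σ : Finset V, σ.Nonempty → σ ⊆ Fm n →
      ((∃ i, i < n ∧ BigF r t Fm i ∧ σ ⊆ Fm i) ↔ ¬ Rm n ⊆ σ)) :
    ∀ n, OkList [] (pref r s t Fm Rm n) := by
  intro n
  induction n with
  | zero => exact okList_nil _
  | succ m ih =>
    rw [pref_succ]
    refine okList_append ih ?_
    rw [List.nil_append]
    by_cases hb : BigF r t Fm m
    · exact okBlock hX hFacet hRsub hRne hKey hb
    · have : blk r s t Fm Rm m = [] := by unfold blk; rw [if_neg hb]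
      rw [this]; exact okList_nil _

theorem blk_cross (hX : IsComplex X)
    (hFacet : ∀ n, BigF r t Fm n → IsFacet X (Fm n)) (hRsub : ∀ n, Rm n ⊆ Fm n)
    (hKey : ∀ n, BigF r t Fm n → ∀ σ : Finset V, σ.Nonempty → σ ⊆ Fm n →
      ((∃ i, i < n ∧ BigF r t Fm i ∧ σ ⊆ Fm i) ↔ ¬ Rm n ⊆ σ))
    {A : Finset V} {m n : ℕ} (hmn : m < n)
    (hAm : A ∈ blk r s t Fm Rm m) (hAn : A ∈ blk r s t Fm Rm n) : False := by
  obtain ⟨hbm, hsubm, -, -, hne⟩ := blk_props hX hFacet hRsub hAm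
  obtain ⟨hbn, hsubn, hRn, -, -⟩ := blk_props hX hFacet hRsub hAn
  exact (hKey n hbn A hne hsubn).1 ⟨m, hmn, hbm, hsubm⟩ hRn

theorem blk_nodup {n : ℕ} : (blk r s t Fm Rm n).Nodup := by
  unfold blk
  split
  · split
    · simp
    · exact Finset.sort_nodup _ _
  · simp

theorem pref_nodup (hX : IsComplex X)
    (hFacet : ∀ n, BigF r t Fm n → IsFacet X (Fm n)) (hRsub : ∀ n, Rm n ⊆ Fm n)
    (hKey : ∀ n, BigF r t Fm n → ∀ σ : Finset V, σ.Nonempty → σ ⊆ Fm n →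
      ((∃ i, i < n ∧ BigF r t Fm i ∧ σ ⊆ Fm i) ↔ ¬ Rm n ⊆ σ)) :
    ∀ n, (pref r s t Fm Rm n).Nodup := by
  intro n
  induction n with
  | zero => simp [pref]
  | succ m ih =>
    rw [pref_succ]
    refine List.Nodup.append ih blk_nodup ?_
    intro A hAP hAb
    obtain ⟨m', hm', hAm'⟩ := pref_mem.1 hAP
    exact blk_cross hX hFacet hRsub hKey hm' hAm' hAb

/-- The core theorem: the interval complex is shellable. -/
theorem core_shellable (hX : IsComplex X)
    (hY : ∀ σ : Finset V, σ ∈ Y ↔ σ ∈ X ∧ σ.card ≤ s + 1 ∧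
      ∃ f ∈ X, IsFacet X f ∧ r + 1 ≤ f.card ∧ σ ⊆ f)
    (hFacet : ∀ n, BigF r t Fm n → IsFacet X (Fm n)) (hRsub : ∀ n, Rm n ⊆ Fm n)
    (hRne : ∀ n, 0 < n → n < t → (Rm n).Nonempty)
    (hSurjF : ∀ f, IsFacet X f → r + 1 ≤ f.card → ∃ n, BigF r t Fm n ∧ Fm n = f)
    (hKey : ∀ n, BigF r t Fm n → ∀ σ : Finset V, σ.Nonempty → σ ⊆ Fm n →
      ((∃ i, i < n ∧ BigF r t Fm i ∧ σ ⊆ Fm i) ↔ ¬ Rm n ⊆ σ)) :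
    Shellable Y := by
  refine shellable_of_list Y (pref r s t Fm Rm t) (pref_nodup hX hFacet hRsub hKey t)
    ?_ ?_ (okPref hX hFacet hRsub hRne hKey t)
  · intro A hA
    obtain ⟨m, -, hAm⟩ := pref_mem.1 hA
    exact blk_facet hX hY hFacet hRsub hAm
  · intro τ hτ
    obtain ⟨hτX, hτcard, f, hfX, hfFac, hfbig, hτf⟩ := (hY τ).1 hτ.1
    obtain ⟨n, hbn, rfl⟩ := hSurjF f hfFac hfbig
    have hτne : τ.Nonempty := hX.1 τ hτX
    obtain ⟨m, hmn, A, hAm, hτA⟩ := cov hKey n hbn τ hτne hτcard hτf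
    have hAY : A ∈ Y := blk_mem_Y hX hY hFacet hRsub hAm
    have : τ = A := hτ.2 A hAY hτA
    rw [this]
    exact pref_mem.2 ⟨m, lt_of_le_of_lt hmn hbn.1, hAm⟩

end Core

theorem extract_data {X : Finset (Finset V)} (hX : IsComplex X) {t : ℕ}
    {F : Fin t → Finset V} (hsh : IsShelling X F) (r : ℕ) :
    ∃ Fm Rm : ℕ → Finset V,
      (∀ n, Rm n ⊆ Fm n) ∧
      (∀ n, 0 < n → n < t → (Rm n).Nonempty) ∧
      (∀ n, BigF r t Fm n → IsFacet X (Fm n)) ∧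
      (∀ f, IsFacet X f → r + 1 ≤ f.card → ∃ n, BigF r t Fm n ∧ Fm n = f) ∧
      (∀ n, BigF r t Fm n → ∀ σ : Finset V, σ.Nonempty → σ ⊆ Fm n →
        ((∃ i, i < n ∧ BigF r t Fm i ∧ σ ⊆ Fm i) ↔ ¬ Rm n ⊆ σ)) := by
  classical
  obtain ⟨hinj, hfac, hsurj, hstep⟩ := hsh
  set Fm : ℕ → Finset V := fun n => if h : n < t then F ⟨n, h⟩ else ∅ with hFm
  set Rm : ℕ → Finset V := fun n =>
    if h : n < t ∧ 0 < n then
      (F ⟨n, h.1⟩).filter (fun x => (F ⟨n, h.1⟩).erase x ∈ (hstep ⟨n, h.1⟩ h.2).choose)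
    else ∅ with hRm
  have hFmeq : ∀ {n : ℕ} (h : n < t), Fm n = F ⟨n, h⟩ := by
    intro n h; rw [hFm]; simp [h]
  have hRmeq : ∀ {n : ℕ} (h : n < t ∧ 0 < n), Rm n =
      (F ⟨n, h.1⟩).filter (fun x => (F ⟨n, h.1⟩).erase x ∈ (hstep ⟨n, h.1⟩ h.2).choose) := by
    intro n h; rw [hRm]; simp [h]
  -- each member of the chosen S is obtained by deleting one vertex
  have hErase : ∀ {n : ℕ} (h : n < t ∧ 0 < n) (s : Finset V),
      s ∈ (hstep ⟨n, h.1⟩ h.2).choose → ∃ x, x ∈ F ⟨n, h.1⟩ ∧ (F ⟨n, h.1⟩).erase x = s := by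
    intro n h s hs
    obtain ⟨-, hcodim, -⟩ := (hstep ⟨n, h.1⟩ h.2).choose_spec
    obtain ⟨hsub, hcard⟩ := hcodim s hs
    have hcard' : ((F ⟨n, h.1⟩) \ s).card = 1 := by
      rw [Finset.card_sdiff_of_subset hsub]; omega
    obtain ⟨x, hx⟩ := Finset.card_eq_one.1 hcard'
    have hxmem : x ∈ (F ⟨n, h.1⟩) \ s := by rw [hx]; exact Finset.mem_singleton_self x
    refine ⟨x, (Finset.mem_sdiff.1 hxmem).1, ?_⟩
    rw [Finset.erase_eq, ← hx, Finset.sdiff_sdiff_self_left, Finset.inter_eq_right.2 hsub]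
  refine ⟨Fm, Rm, ?_, ?_, ?_, ?_, ?_⟩
  · intro n
    by_cases h : n < t ∧ 0 < n
    · rw [hRmeq h, hFmeq h.1]; exact Finset.filter_subset _ _
    · rw [hRm]; simp [h]
  · intro n hn0 hnt
    have h : n < t ∧ 0 < n := ⟨hnt, hn0⟩
    obtain ⟨hSne, -, -⟩ := (hstep ⟨n, h.1⟩ h.2).choose_spec
    obtain ⟨s, hs⟩ := hSne
    obtain ⟨x, hxF, hxe⟩ := hErase h s hs
    rw [hRmeq h]
    exact ⟨x, Finset.mem_filter.2 ⟨hxF, by rw [hxe]; exact hs⟩⟩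
  · intro n hb
    rw [hFmeq hb.1]; exact hfac _
  · intro f hf hfcard
    obtain ⟨i, hi⟩ := hsurj f hf
    refine ⟨i.1, ⟨i.2, ?_⟩, ?_⟩
    · rw [hFmeq i.2]; simp only [Fin.eta]; rw [hi]; exact hfcard
    · rw [hFmeq i.2]; simp only [Fin.eta]; exact hi
  · intro n hb σ hσne hσF
    have hnt : n < t := hb.1
    constructor
    · rintro ⟨i, hin, hbi, hσi⟩
      have h : n < t ∧ 0 < n := ⟨hnt, by omega⟩
      obtain ⟨-, -, hiff⟩ := (hstep ⟨n, h.1⟩ h.2).choose_spec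
      have hex : σ ⊆ F ⟨n, h.1⟩ ∧ ∃ j : Fin t, j < ⟨n, h.1⟩ ∧ σ ⊆ F j := by
        refine ⟨by rw [← hFmeq h.1]; exact hσF, ⟨i, hbi.1⟩, ?_, ?_⟩
        · simpa [Fin.lt_def] using hin
        · rw [← hFmeq hbi.1]; exact hσi
      obtain ⟨s, hsS, hσs⟩ := (hiff σ hσne).1 hex
      obtain ⟨x, hxF, hxe⟩ := hErase h s hsS
      intro hRσ
      rw [hRmeq h] at hRσ
      have hxR : x ∈ (F ⟨n, h.1⟩).filter
          (fun x => (F ⟨n, h.1⟩).erase x ∈ (hstep ⟨n, h.1⟩ h.2).choose) :=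
        Finset.mem_filter.2 ⟨hxF, by rw [hxe]; exact hsS⟩
      have hxσ : x ∈ σ := hRσ hxR
      have : x ∈ s := hσs hxσ
      rw [← hxe] at this
      exact (Finset.notMem_erase x _) this
    · intro hR
      have hn0 : 0 < n := by
        by_contra hcon
        apply hR
        have : ¬ (n < t ∧ 0 < n) := by omega
        rw [hRm]; simp [this]
      have h : n < t ∧ 0 < n := ⟨hnt, hn0⟩
      obtain ⟨-, hcodim, hiff⟩ := (hstep ⟨n, h.1⟩ h.2).choose_spec
      rw [hRmeq h] at hR
      obtain ⟨x, hxR, hxσ⟩ := Finset.not_subset.1 hR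
      obtain ⟨hxF, hxe⟩ := Finset.mem_filter.1 hxR
      have hσs : σ ⊆ (F ⟨n, h.1⟩).erase x := by
        refine Finset.subset_erase.2 ⟨by rw [← hFmeq h.1]; exact hσF, hxσ⟩
      have hsne : ((F ⟨n, h.1⟩).erase x).Nonempty := hσne.mono hσs
      obtain ⟨-, j, hjn, hsj⟩ := (hiff _ hsne).2 ⟨_, hxe, subset_rfl⟩
      have hscard : ((F ⟨n, h.1⟩).erase x).card + 1 = (F ⟨n, h.1⟩).card :=
        (hcodim _ hxe).2
      have hjbig : r + 1 ≤ (F j).card := by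
        by_contra hcon
        push_neg at hcon
        have hcard2 : (F j).card ≤ ((F ⟨n, h.1⟩).erase x).card := by
          have := hb.2
          rw [hFmeq h.1] at this
          omega
        have heq : (F ⟨n, h.1⟩).erase x = F j :=
          Finset.eq_of_subset_of_card_le hsj hcard2
        have heq2 : F j = F ⟨n, h.1⟩ :=
          (hfac j).2 _ (hfac ⟨n, h.1⟩).1 (by rw [← heq]; exact Finset.erase_subset _ _)
        have := hb.2
        rw [hFmeq h.1, ← heq2] at this
        omega
      refine ⟨j.1, by simpa [Fin.lt_def] using hjn, ⟨j.2, ?_⟩, ?_⟩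
      · rw [hFmeq j.2]; simpa only [Fin.eta] using hjbig
      · rw [hFmeq j.2]; simp only [Fin.eta]
        exact hσs.trans hsj

/-- if `X` is a shellable finite simplicial complex and `0 ≤ r ≤ s ≤ dim X`,
then `X^{(r,s)} = {σ ∈ X : dim σ ≤ s and σ ⊆ F for some facet F with dim F ≥ r}` is
shellable.  (Dimensions are expressed via cardinalities: `dim σ = σ.card - 1`, and
`s ≤ dim X` reads `s + 1 ≤ X.sup card`.) -/
theorem shellable_interval (X : Finset (Finset V)) (hX : IsComplex X)
    (hshell : Shellable X) (r s : ℕ) (hrs : r ≤ s) (hs : s + 1 ≤ X.sup Finset.card) :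
    Shellable (X.filter fun σ =>
      σ.card ≤ s + 1 ∧ ∃ f ∈ X, IsFacet X f ∧ r + 1 ≤ f.card ∧ σ ⊆ f) := by
  classical
  obtain ⟨t, F, hsh⟩ := hshell
  obtain ⟨Fm, Rm, hRsub, hRne, hFacet, hSurjF, hKey⟩ := extract_data hX hsh r
  letI : LinearOrder V := IsWellOrder.linearOrder WellOrderingRel
  refine core_shellable (t := t) (s := s) (r := r) (Fm := Fm) (Rm := Rm) hX ?_
    hFacet hRsub hRne hSurjF hKey
  intro σ
  simp [Finset.mem_filter, and_assoc]
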